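/- Let P be a GMMN instance whose intersection graph IG[P] is connected, has maximum degree at most Δ, and is neither a complete graph nor an odd cycle, and let N* ∈ Opt(P) be an optimal solution for P. Then every feasible solution N ∈ Feas(P) satisfies ‖N‖ ≤ Δ·‖N*‖. (Corollary B.2.) -/

import Mathlib

noncomputable section
open scoped Classical

/-- A point in the Euclidean plane. -/
abbrev Point : Type := ℝ × ℝ

/-- The Manhattan distance `d(p, q)`. -/
def manh (p q : Point) : ℝ := |p.1 - q.1| + |p.2 - q.2|

/-- The Euclidean length `‖pq‖` of the segment between `p` and `q`. -/
def euclen (p q : Point) : ℝ := Real.sqrt ((p.1 - q.1) ^ 2 + (p.2 - q.2) ^ 2)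

/-- The segment `pq` is axis-aligned. -/
def axisAligned (p q : Point) : Prop := p.1 = q.1 ∨ p.2 = q.2

/-- `z` lies in the bounding box `B(a, b)` (componentwise between `a ⊓ b` and `a ⊔ b`). -/
def inBox (a b z : Point) : Prop := a ⊓ b ≤ z ∧ z ≤ a ⊔ b

lemma euclen_comm (p q : Point) : euclen p q = euclen q p := by
  unfold euclen; ring_nf

/-- Length of an (unordered) edge. -/
def sym2Len : Sym2 Point → ℝ := Sym2.lift ⟨euclen, euclen_comm⟩

/-- The length of a network, given by its (finite) edge set. -/
def netLength (N : Finset (Sym2 Point)) : ℝ := ∑ e ∈ N, sym2Len e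

/-- A (simple) path in the plane, given by its sequence of (distinct) vertices. -/
structure GPath where
  k : ℕ
  pts : Fin (k + 1) → Point
  inj : Function.Injective pts

/-- The `i`-th edge of a path. -/
def GPath.edge (π : GPath) (i : Fin π.k) : Sym2 Point :=
  s(π.pts i.castSucc, π.pts i.succ)

/-- The edge set of a path. -/
def GPath.edges (π : GPath) : Finset (Sym2 Point) :=
  Finset.image π.edge Finset.univ

/-- The total (Euclidean) length of a path. -/
def GPath.length (π : GPath) : ℝ :=
  ∑ i : Fin π.k, euclen (π.pts i.castSucc) (π.pts i.succ)

/-- `π` is a Manhattan path (M-path) for the pair `(s, t)`: an `s`–`t` path all of whose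
edges are axis-aligned and whose total length equals the Manhattan distance `d(s, t)`. -/
def IsMPath (s t : Point) (π : GPath) : Prop :=
  π.pts 0 = s ∧ π.pts (Fin.last π.k) = t ∧
  (∀ i : Fin π.k, axisAligned (π.pts i.castSucc) (π.pts i.succ)) ∧
  π.length = manh s t

/-- A GMMN instance: a finite set of pairs of points. -/
abbrev Inst : Type := Finset (Point × Point)

/-- The vertex set of the Hanan grid `H(P)`. -/
def hananV (P : Inst) : Finset Point :=
  ((P.image fun v => v.1.1) ∪ (P.image fun v => v.2.1)) ×ˢ
  ((P.image fun v => v.1.2) ∪ (P.image fun v => v.2.2))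

/-- `{p, q}` is an edge of the Hanan grid `H(P)`: an axis-aligned segment between two distinct
grid vertices containing no third grid vertex. -/
def IsHananEdge (P : Inst) (p q : Point) : Prop :=
  p ∈ hananV P ∧ q ∈ hananV P ∧ p ≠ q ∧ axisAligned p q ∧
  ∀ z ∈ hananV P, inBox p q z → z = p ∨ z = q

/-- All edges of the path `π` are edges of the Hanan grid `H(P)`. -/
def OnGrid (P : Inst) (π : GPath) : Prop :=
  ∀ i : Fin π.k, IsHananEdge P (π.pts i.castSucc) (π.pts i.succ)

/-- `π ∈ Π_P(u)`: an M-path for the pair `u` that is a subgraph of the Hanan grid `H(P)`. -/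
def InPi (P : Inst) (u : Point × Point) (π : GPath) : Prop :=
  IsMPath u.1 u.2 π ∧ OnGrid P π

/-- The network `∪_{v ∈ P} π_v` determined by a choice of M-paths. -/
def netOf (P : Inst) (f : Point × Point → GPath) : Finset (Sym2 Point) :=
  P.biUnion fun v => (f v).edges

/-- `f` gives a feasible solution in `Feas(P)`: an M-path on the Hanan grid for each pair. -/
def IsFeasChoice (P : Inst) (f : Point × Point → GPath) : Prop :=
  ∀ v ∈ P, InPi P v (f v)

/-- `f` gives an optimal solution in `Opt(P)`. -/
def IsOptChoice (P : Inst) (f : Point × Point → GPath) : Prop :=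
  IsFeasChoice P f ∧
  ∀ g : Point × Point → GPath, IsFeasChoice P g →
    netLength (netOf P f) ≤ netLength (netOf P g)

/-- Adjacency in the intersection graph `IG[P]`: `u ≠ v` and the induced subgrids
`H(P, u)` and `H(P, v)` share an edge. -/
def IGAdj (P : Inst) (u v : Point × Point) : Prop :=
  u ≠ v ∧ ∃ p q : Point, IsHananEdge P p q ∧
    inBox u.1 u.2 p ∧ inBox u.1 u.2 q ∧ inBox v.1 v.2 p ∧ inBox v.1 v.2 q

/-- The total length `‖π₁ ∩ π₂‖` of the segments shared by two paths. -/
def sharedLen (π₁ π₂ : GPath) : ℝ := netLength (π₁.edges ∩ π₂.edges)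

/-- A pair `(p, q)` with `p_x ≤ q_x` is regular if `p_y ≤ q_y`. -/
def Regular (u : Point × Point) : Prop := u.1.1 ≤ u.2.1 ∧ u.1.2 ≤ u.2.2

/-- A pair `(p, q)` with `p_x ≤ q_x` is flipped if `p_y ≥ q_y`. -/
def Flipped (u : Point × Point) : Prop := u.1.1 ≤ u.2.1 ∧ u.2.2 ≤ u.1.2

/-- The intersection graph `IG[P]` as a simple graph on the pairs of `P`. -/
def IG (P : Inst) : SimpleGraph {v : Point × Point // v ∈ P} where
  Adj u v := IGAdj P u.1 v.1
  symm := ⟨by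
    rintro u v ⟨hne, p, q, he, h1, h2, h3, h4⟩
    exact ⟨hne.symm, p, q, he, h3, h4, h1, h2⟩⟩
  loopless := ⟨fun u h => h.1 rfl⟩


lemma sym2Len_mk (p q : Point) : sym2Len s(p, q) = euclen p q := rfl

lemma sym2Len_nonneg (e : Sym2 Point) : 0 ≤ sym2Len e := by
  induction e using Sym2.ind with
  | _ p q => exact Real.sqrt_nonneg _

lemma netLength_nonneg (N : Finset (Sym2 Point)) : 0 ≤ netLength N :=
  Finset.sum_nonneg fun e _ => sym2Len_nonneg e

lemma euclen_axis (p q : Point) (h : axisAligned p q) :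
    euclen p q = |p.1 - q.1| + |p.2 - q.2| := by
  rcases h with h | h <;> simp [euclen, h, Real.sqrt_sq_eq_abs]

lemma edge_injective (π : GPath) : Function.Injective π.edge := by
  intro i j hij
  rw [GPath.edge, GPath.edge, Sym2.eq_iff] at hij
  rcases hij with ⟨h1, _⟩ | ⟨h1, h2⟩
  · exact Fin.castSucc_injective _ (π.inj h1)
  · have e1 := π.inj h1
    have e2 := π.inj h2
    have : (i : ℕ) = (j : ℕ) + 1 := by
      simpa [Fin.ext_iff] using e1
    have : (i : ℕ) + 1 = (j : ℕ) := by
      simpa [Fin.ext_iff] using e2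
    omega

lemma netLength_edges (π : GPath) : netLength π.edges = π.length := by
  rw [netLength, GPath.edges, Finset.sum_image (fun a _ b _ h => edge_injective π h)]
  rfl

lemma tele_sum (h : ℕ → ℝ) (a : ℕ) : ∀ b, a ≤ b →
    ∑ i ∈ Finset.Ico a b, (h (i + 1) - h i) = h b - h a := by
  intro b
  induction b with
  | zero => intro hb; simp [Nat.le_zero.mp hb]
  | succ n ih =>
    intro hb
    rcases Nat.lt_or_ge a (n + 1) with hlt | hge
    · have han : a ≤ n := by omega
      rw [Finset.sum_Ico_succ_top han, ih han]; ring
    · have : a = n + 1 := by omega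
      simp [this]

lemma abs_tele (h : ℕ → ℝ) (a b : ℕ) (hab : a ≤ b) :
    |h b - h a| ≤ ∑ i ∈ Finset.Ico a b, |h (i + 1) - h i| := by
  calc |h b - h a| = |∑ i ∈ Finset.Ico a b, (h (i + 1) - h i)| := by rw [tele_sum h a b hab]
    _ ≤ ∑ i ∈ Finset.Ico a b, |h (i + 1) - h i| := Finset.abs_sum_le_sum_abs _ _

lemma between_of_abs_eq {a b c : ℝ} (h : |a - b| + |c - a| = |c - b|) :
    b ⊓ c ≤ a ∧ a ≤ b ⊔ c := by
  constructor
  · by_contra hc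
    rw [not_le, lt_inf_iff] at hc
    obtain ⟨h1, h2⟩ := hc
    have e1 : |a - b| = b - a := by rw [abs_of_nonpos (by linarith)]; ring
    have e2 : |c - a| = c - a := by rw [abs_of_nonneg (by linarith)]
    rcases le_total b c with hbc | hbc
    · rw [e1, e2, abs_of_nonneg (by linarith)] at h; linarith
    · rw [e1, e2, abs_of_nonpos (by linarith)] at h; linarith
  · by_contra hc
    rw [not_le, sup_lt_iff] at hc
    obtain ⟨h1, h2⟩ := hc
    have e1 : |a - b| = a - b := by rw [abs_of_nonneg (by linarith)]
    have e2 : |c - a| = a - c := by rw [abs_of_nonpos (by linarith)]; ring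
    rcases le_total b c with hbc | hbc
    · rw [e1, e2, abs_of_nonneg (by linarith)] at h; linarith
    · rw [e1, e2, abs_of_nonpos (by linarith)] at h; linarith

lemma mpath_mem_box {s t : Point} {π : GPath} (hm : IsMPath s t π) (j : Fin (π.k + 1)) :
    inBox s t (π.pts j) := by
  obtain ⟨hs, ht, hax, hlen⟩ := hm
  let F : ℕ → Fin (π.k + 1) := fun n => ⟨min n π.k, Nat.lt_succ_of_le (min_le_right n π.k)⟩
  set X : ℕ → ℝ := fun n => (π.pts (F n)).1 with hX
  set Y : ℕ → ℝ := fun n => (π.pts (F n)).2 with hY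
  have hF0 : F 0 = 0 := by simp [F, Fin.ext_iff]
  have hFk : F π.k = Fin.last π.k := by simp [F, Fin.ext_iff]
  have hFc : ∀ i : Fin π.k, F i.val = i.castSucc := by
    intro i; simp [F, Fin.ext_iff, Nat.min_eq_left i.isLt.le]
  have hFs : ∀ i : Fin π.k, F (i.val + 1) = i.succ := by
    intro i; simp [F, Fin.ext_iff, Nat.min_eq_left (Nat.succ_le_of_lt i.isLt)]
  have hXc : ∀ i : Fin π.k, X i.val = (π.pts i.castSucc).1 := by
    intro i; simp only [hX]; rw [hFc]
  have hXsc : ∀ i : Fin π.k, X (i.val + 1) = (π.pts i.succ).1 := by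
    intro i; simp only [hX]; rw [hFs]
  have hYc : ∀ i : Fin π.k, Y i.val = (π.pts i.castSucc).2 := by
    intro i; simp only [hY]; rw [hFc]
  have hYsc : ∀ i : Fin π.k, Y (i.val + 1) = (π.pts i.succ).2 := by
    intro i; simp only [hY]; rw [hFs]
  have hterm : ∀ i : Fin π.k,
      euclen (π.pts i.castSucc) (π.pts i.succ)
        = |X (i.val + 1) - X i.val| + |Y (i.val + 1) - Y i.val| := by
    intro i
    rw [euclen_axis _ _ (hax i), hXc, hXsc, hYc, hYsc,
      abs_sub_comm (π.pts i.castSucc).1 (π.pts i.succ).1,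
      abs_sub_comm (π.pts i.castSucc).2 (π.pts i.succ).2]
  have hlen' : (∑ i ∈ Finset.range π.k, |X (i + 1) - X i|)
      + (∑ i ∈ Finset.range π.k, |Y (i + 1) - Y i|) = manh s t := by
    rw [← hlen, GPath.length, ← Finset.sum_add_distrib,
      ← Fin.sum_univ_eq_sum_range (fun n => |X (n + 1) - X n| + |Y (n + 1) - Y n|) π.k]
    exact (Finset.sum_congr rfl fun i _ => (hterm i)).symm
  have hXs : X 0 = s.1 := by simp only [hX]; rw [hF0, hs]
  have hYs : Y 0 = s.2 := by simp only [hY]; rw [hF0, hs]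
  have hXt : X π.k = t.1 := by simp only [hX]; rw [hFk, ht]
  have hYt : Y π.k = t.2 := by simp only [hY]; rw [hFk, ht]
  have hA : |X π.k - X 0| ≤ ∑ i ∈ Finset.range π.k, |X (i + 1) - X i| := by
    rw [Finset.range_eq_Ico]; exact abs_tele X 0 π.k (Nat.zero_le _)
  have hB : |Y π.k - Y 0| ≤ ∑ i ∈ Finset.range π.k, |Y (i + 1) - Y i| := by
    rw [Finset.range_eq_Ico]; exact abs_tele Y 0 π.k (Nat.zero_le _)
  have hman : manh s t = |X π.k - X 0| + |Y π.k - Y 0| := by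
    rw [manh, hXs, hYs, hXt, hYt, abs_sub_comm s.1 t.1, abs_sub_comm s.2 t.2]
  have hAeq : ∑ i ∈ Finset.range π.k, |X (i + 1) - X i| = |X π.k - X 0| := by linarith
  have hBeq : ∑ i ∈ Finset.range π.k, |Y (i + 1) - Y i| = |Y π.k - Y 0| := by linarith
  have hjk : (j : ℕ) ≤ π.k := Nat.lt_succ_iff.mp j.isLt
  have hFj : F j.val = j := by simp [F, Fin.ext_iff, Nat.min_eq_left hjk]
  have hXj : X j.val = (π.pts j).1 := by simp only [hX]; rw [hFj]
  have hYj : Y j.val = (π.pts j).2 := by simp only [hY]; rw [hFj]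
  have key : ∀ Z : ℕ → ℝ, (∑ i ∈ Finset.range π.k, |Z (i + 1) - Z i| = |Z π.k - Z 0|) →
      Z 0 ⊓ Z π.k ≤ Z j.val ∧ Z j.val ≤ Z 0 ⊔ Z π.k := by
    intro Z hZ
    have h1 : |Z j.val - Z 0| ≤ ∑ i ∈ Finset.Ico 0 j.val, |Z (i + 1) - Z i| :=
      abs_tele Z 0 j.val (Nat.zero_le _)
    have h2 : |Z π.k - Z j.val| ≤ ∑ i ∈ Finset.Ico j.val π.k, |Z (i + 1) - Z i| :=
      abs_tele Z j.val π.k hjk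
    have hsplit : (∑ i ∈ Finset.Ico 0 j.val, |Z (i + 1) - Z i|)
        + (∑ i ∈ Finset.Ico j.val π.k, |Z (i + 1) - Z i|) = |Z π.k - Z 0| := by
      rw [Finset.sum_Ico_consecutive _ (Nat.zero_le _) hjk, ← Finset.range_eq_Ico, hZ]
    have htri : |Z π.k - Z 0| ≤ |Z j.val - Z 0| + |Z π.k - Z j.val| := by
      calc |Z π.k - Z 0| = |(Z j.val - Z 0) + (Z π.k - Z j.val)| := by ring_nf
        _ ≤ _ := abs_add_le _ _
    exact between_of_abs_eq (le_antisymm (by linarith) htri)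
  have hXkey := key X hAeq
  have hYkey := key Y hBeq
  rw [hXj, hXs, hXt] at hXkey
  rw [hYj, hYs, hYt] at hYkey
  exact ⟨⟨hXkey.1, hYkey.1⟩, ⟨hXkey.2, hYkey.2⟩⟩

lemma closed_set_eq_univ {V : Type*} {G : SimpleGraph V} (hc : G.Connected)
    (T : Set V) {v₀ : V} (hv₀ : v₀ ∈ T)
    (hcl : ∀ a ∈ T, ∀ b, G.Adj a b → b ∈ T) : ∀ w, w ∈ T := by
  intro w
  obtain ⟨p⟩ := hc.preconnected v₀ w
  induction p with
  | nil => exact hv₀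
  | cons h p ih => exact ih (hcl _ hv₀ _ h)

lemma clique_card_le {P : Inst} {Δ : ℕ}
    (hconn : (IG P).Connected)
    (hdeg : ∀ x : {v : Point × Point // v ∈ P}, ((IG P).neighborSet x).ncard ≤ Δ)
    (hnotcomplete : ¬ ∀ x y : {v : Point × Point // v ∈ P}, x ≠ y → (IG P).Adj x y)
    (S : Finset (Point × Point)) (hSP : S ⊆ P)
    (hclq : ∀ u ∈ S, ∀ v ∈ S, u ≠ v → IGAdj P u v) : S.card ≤ Δ := by
  by_contra hcard
  push_neg at hcard
  apply hnotcomplete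
  have hT : ∀ w : {v : Point × Point // v ∈ P}, w.1 ∈ S → ∀ b, (IG P).Adj w b → b.1 ∈ S := by
    intro a ha b hab
    -- the set of neighbors of `a` coming from `S.erase a.1`
    set A : Finset {v : Point × Point // v ∈ P} :=
      Finset.univ.filter (fun x => x.1 ∈ S.erase a.1) with hA
    have hAsub : (↑A : Set _) ⊆ (IG P).neighborSet a := by
      intro x hx
      simp only [hA, Finset.coe_filter, Set.mem_setOf_eq, Finset.mem_univ, true_and] at hx
      have hne : x.1 ≠ a.1 := (Finset.mem_erase.mp hx).1
      have hxS : x.1 ∈ S := (Finset.mem_erase.mp hx).2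
      exact ((IG P).adj_symm (hclq _ hxS _ ha (by exact hne)))
    have hAcard : A.card = (S.erase a.1).card := by
      rw [hA]
      apply Finset.card_bij (fun x _ => x.1)
      · intro x hx; simpa using (Finset.mem_filter.mp hx).2
      · intro x hx y hy hxy; exact Subtype.ext hxy
      · intro y hy
        have hyP : y ∈ P := hSP (Finset.mem_erase.mp hy).2
        exact ⟨⟨y, hyP⟩, Finset.mem_filter.mpr ⟨Finset.mem_univ _, hy⟩, rfl⟩
    have hge : Δ ≤ A.card := by
      rw [hAcard, Finset.card_erase_of_mem ha]
      omega
    have heq : (↑A : Set _) = (IG P).neighborSet a :=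
      Set.eq_of_subset_of_ncard_le hAsub
        (le_trans (hdeg a) (by rw [Set.ncard_coe_finset]; exact hge)) (Set.toFinite _)
    have hb : b ∈ (IG P).neighborSet a := hab
    rw [← heq] at hb
    simp only [hA, Finset.coe_filter, Set.mem_setOf_eq, Finset.mem_univ, true_and] at hb
    exact (Finset.mem_erase.mp hb).2
  -- S is nonempty
  obtain ⟨v₀, hv₀⟩ := Finset.card_pos.mp (by omega : 0 < S.card)
  have hall : ∀ w : {v : Point × Point // v ∈ P}, w.1 ∈ S :=
    closed_set_eq_univ hconn {w | w.1 ∈ S} (show ((⟨v₀, hSP hv₀⟩ : {v // v ∈ P})).1 ∈ S from hv₀)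
      hT
  intro x y hxy
  exact hclq _ (hall x) _ (hall y) (fun h => hxy (Subtype.ext h))

lemma netLength_union_le (s t : Finset (Sym2 Point)) :
    netLength (s ∪ t) ≤ netLength s + netLength t := by
  have h := Finset.sum_union_inter (s₁ := s) (s₂ := t) (f := sym2Len)
  have h0 : 0 ≤ ∑ e ∈ s ∩ t, sym2Len e := Finset.sum_nonneg fun e _ => sym2Len_nonneg e
  simp only [netLength] at *
  linarith

lemma netLength_biUnion_le (P : Inst) (E : Point × Point → Finset (Sym2 Point)) :
    netLength (P.biUnion E) ≤ ∑ v ∈ P, netLength (E v) := by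
  induction P using Finset.induction_on with
  | empty => simp [netLength]
  | insert a s ha ih =>
    rw [Finset.biUnion_insert, Finset.sum_insert ha]
    calc netLength (E a ∪ s.biUnion E) ≤ netLength (E a) + netLength (s.biUnion E) :=
        netLength_union_le _ _
      _ ≤ netLength (E a) + ∑ v ∈ s, netLength (E v) := by linarith

lemma edges_spec {P : Inst} {u : Point × Point} {π : GPath} (h : InPi P u π)
    {e : Sym2 Point} (he : e ∈ π.edges) :
    ∃ p q : Point, e = s(p, q) ∧ IsHananEdge P p q ∧ inBox u.1 u.2 p ∧ inBox u.1 u.2 q := by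
  obtain ⟨i, -, rfl⟩ := Finset.mem_image.mp he
  exact ⟨_, _, rfl, h.2 i, mpath_mem_box h.1 i.castSucc, mpath_mem_box h.1 i.succ⟩

theorem degree_approximation' (P : Inst) (Δ : ℕ)
    (hconn : (IG P).Connected)
    (hdeg : ∀ x : {v : Point × Point // v ∈ P}, ((IG P).neighborSet x).ncard ≤ Δ)
    (hnotcomplete : ¬ ∀ x y : {v : Point × Point // v ∈ P}, x ≠ y → (IG P).Adj x y)
    (f g : Point × Point → GPath) (hf : IsFeasChoice P f) (hg : IsFeasChoice P g) :
    netLength (netOf P g) ≤ (Δ : ℝ) * netLength (netOf P f) := by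
  set N := netOf P f with hN
  have hsub : ∀ v ∈ P, (f v).edges ⊆ N := fun v hv => by
    rw [hN, netOf]; exact Finset.subset_biUnion_of_mem (fun v => (f v).edges) hv
  -- counting identity
  have hswap : ∑ v ∈ P, netLength ((f v).edges)
      = ∑ e ∈ N, ((P.filter fun v => e ∈ (f v).edges).card : ℝ) * sym2Len e := by
    calc ∑ v ∈ P, netLength ((f v).edges)
        = ∑ v ∈ P, ∑ e ∈ N, if e ∈ (f v).edges then sym2Len e else 0 := by
          refine Finset.sum_congr rfl fun v hv => ?_
          rw [← Finset.sum_filter, netLength]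
          congr 1
          ext e
          simp only [Finset.mem_filter]
          exact ⟨fun h => ⟨hsub v hv h, h⟩, fun h => h.2⟩
      _ = ∑ e ∈ N, ∑ v ∈ P, if e ∈ (f v).edges then sym2Len e else 0 := Finset.sum_comm
      _ = ∑ e ∈ N, ((P.filter fun v => e ∈ (f v).edges).card : ℝ) * sym2Len e := by
          refine Finset.sum_congr rfl fun e he => ?_
          rw [← Finset.sum_filter, Finset.sum_const, nsmul_eq_mul]
  -- each edge is used by at most Δ pairs
  have hcount : ∀ e ∈ N, (P.filter fun v => e ∈ (f v).edges).card ≤ Δ := by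
    intro e he
    apply clique_card_le hconn hdeg hnotcomplete _ (Finset.filter_subset _ _)
    intro u hu v hv huv
    obtain ⟨huP, hue⟩ := Finset.mem_filter.mp hu
    obtain ⟨hvP, hve⟩ := Finset.mem_filter.mp hv
    obtain ⟨p, q, rfl, hh, hup, huq⟩ := edges_spec (hf u huP) hue
    obtain ⟨p', q', hpq, -, hvp, hvq⟩ := edges_spec (hf v hvP) hve
    refine ⟨huv, p, q, hh, hup, huq, ?_, ?_⟩
    · rcases (Sym2.eq_iff.mp hpq) with ⟨h1, h2⟩ | ⟨h1, h2⟩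
      · rw [h1]; exact hvp
      · rw [h1]; exact hvq
    · rcases (Sym2.eq_iff.mp hpq) with ⟨h1, h2⟩ | ⟨h1, h2⟩
      · rw [h2]; exact hvq
      · rw [h2]; exact hvp
  -- lengths of individual paths equal Manhattan distances
  have hfeq : ∀ v ∈ P, netLength ((f v).edges) = manh v.1 v.2 := fun v hv => by
    rw [netLength_edges]; exact (hf v hv).1.2.2.2
  have hgeq : ∀ v ∈ P, netLength ((g v).edges) = manh v.1 v.2 := fun v hv => by
    rw [netLength_edges]; exact (hg v hv).1.2.2.2
  calc netLength (netOf P g) ≤ ∑ v ∈ P, netLength ((g v).edges) := netLength_biUnion_le _ _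
    _ = ∑ v ∈ P, netLength ((f v).edges) := by
        refine Finset.sum_congr rfl fun v hv => ?_
        rw [hfeq v hv, hgeq v hv]
    _ = ∑ e ∈ N, ((P.filter fun v => e ∈ (f v).edges).card : ℝ) * sym2Len e := hswap
    _ ≤ ∑ e ∈ N, (Δ : ℝ) * sym2Len e := by
        refine Finset.sum_le_sum fun e he => ?_
        exact mul_le_mul_of_nonneg_right (by exact_mod_cast hcount e he) (sym2Len_nonneg e)
    _ = (Δ : ℝ) * netLength N := by rw [netLength, Finset.mul_sum]

/-- Corollary B.2: if the intersection graph `IG[P]` is connected, has maximum degree at most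
`Δ`, and is neither a complete graph nor an odd cycle, then every feasible solution has length
at most `Δ` times the length of an optimal solution. -/
theorem degree_approximation (P : Inst) (Δ : ℕ)
    (hconn : (IG P).Connected)
    (hdeg : ∀ x : {v : Point × Point // v ∈ P}, ((IG P).neighborSet x).ncard ≤ Δ)
    (hnotcomplete : ¬ ∀ x y : {v : Point × Point // v ∈ P}, x ≠ y → (IG P).Adj x y)
    (hnotoddcycle : ¬ ∃ n : ℕ, Odd n ∧ Nonempty ((IG P) ≃g SimpleGraph.cycleGraph n))
    (f g : Point × Point → GPath) (hf : IsOptChoice P f) (hg : IsFeasChoice P g) :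
    netLength (netOf P g) ≤ (Δ : ℝ) * netLength (netOf P f) := by
  exact degree_approximation' P Δ hconn hdeg hnotcomplete f g hf.1 hg

end
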